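/- Let η be a real-valued, continuously differentiable, admissible fiducial vector with ∫₀^{2π}|η(α)|² dα = 1, and let A_p be the operator (A_p ψ)(α) = −i (c₂/(κ c₁)) ψ′(α) − λ a ψ(α), where c_ν := ∫_{γ−π}^{γ} |η(q)|²/(sin(γ−q))^ν dq and a := (1/(κ c₁)) ∫_{γ−π}^{γ} sin(ζ−q)|η(q)|²/(sin(γ−q))² dq. Then the lower symbol of A_p is affine in p and independent of q: ⟨η_{p,q}, A_p η_{p,q}⟩ = (c₂/c₁) · (∫₀^{2π} |η(α)|² sin(γ−α) dα) · p + λ (c₂/(κ c₁)) · (∫₀^{2π} |η(α)|² sin(ζ−α) dα) − λ a. -/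

import Mathlib

open Real MeasureTheory

/-- The coherent state (for a real fiducial vector `η`):
`η_{p,q}(α) = exp(i[κp cos(q−α+γ) + λ cos(q−α+ζ)]) · η(α−q)`. -/
noncomputable def CSr (κ lam γ ζ : ℝ) (η : ℝ → ℝ) (p q α : ℝ) : ℂ :=
  Complex.exp (Complex.I *
      (κ * p * Real.cos (q - α + γ) + lam * Real.cos (q - α + ζ))) * (η (α - q) : ℂ)

/-- `c₁ = ∫_{γ−π}^{γ} |η(q)|²/sin(γ−q) dq`. -/
noncomputable def c1 (γ : ℝ) (η : ℝ → ℝ) : ℝ :=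
  ∫ q in (γ - π)..γ, η q ^ 2 / Real.sin (γ - q)

/-- `c₂ = ∫_{γ−π}^{γ} |η(q)|²/(sin(γ−q))² dq`. -/
noncomputable def c2 (γ : ℝ) (η : ℝ → ℝ) : ℝ :=
  ∫ q in (γ - π)..γ, η q ^ 2 / Real.sin (γ - q) ^ 2

/-- `a = (1/(κ c₁)) ∫_{γ−π}^{γ} sin(ζ−q) |η(q)|²/(sin(γ−q))² dq`. -/
noncomputable def aconst (κ γ ζ : ℝ) (η : ℝ → ℝ) : ℝ :=
  1 / (κ * c1 γ η) * ∫ q in (γ - π)..γ, Real.sin (ζ - q) * η q ^ 2 / Real.sin (γ - q) ^ 2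

lemma csr_hasDerivAt (κ lam γ ζ : ℝ) (η : ℝ → ℝ) (hηC1 : ContDiff ℝ 1 η) (p q α : ℝ) :
    HasDerivAt (CSr κ lam γ ζ η p q)
      (Complex.exp (Complex.I *
          ((κ * p * Real.cos (q - α + γ) + lam * Real.cos (q - α + ζ) : ℝ) : ℂ)) *
        (Complex.I * ((κ * p * Real.sin (q - α + γ) + lam * Real.sin (q - α + ζ) : ℝ) : ℂ) *
            (η (α - q) : ℂ) + ((deriv η (α - q) : ℝ) : ℂ))) α := by
  have hlin1 : HasDerivAt (fun x : ℝ => q - x + γ) (-1) α := by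
    simpa using (((hasDerivAt_id α).const_sub q).add_const γ)
  have hlin2 : HasDerivAt (fun x : ℝ => q - x + ζ) (-1) α := by
    simpa using (((hasDerivAt_id α).const_sub q).add_const ζ)
  have hc1 : HasDerivAt (fun x : ℝ => Real.cos (q - x + γ)) (Real.sin (q - α + γ)) α := by
    simpa [Function.comp_def] using (Real.hasDerivAt_cos (q - α + γ)).comp α hlin1
  have hc2 : HasDerivAt (fun x : ℝ => Real.cos (q - x + ζ)) (Real.sin (q - α + ζ)) α := by
    simpa [Function.comp_def] using (Real.hasDerivAt_cos (q - α + ζ)).comp α hlin2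
  have hf : HasDerivAt
      (fun x : ℝ => κ * p * Real.cos (q - x + γ) + lam * Real.cos (q - x + ζ))
      (κ * p * Real.sin (q - α + γ) + lam * Real.sin (q - α + ζ)) α :=
    (hc1.const_mul (κ * p)).add (hc2.const_mul lam)
  have hexp : HasDerivAt
      (fun x : ℝ => Complex.exp (Complex.I *
          ((κ * p * Real.cos (q - x + γ) + lam * Real.cos (q - x + ζ) : ℝ) : ℂ)))
      (Complex.exp (Complex.I *
          ((κ * p * Real.cos (q - α + γ) + lam * Real.cos (q - α + ζ) : ℝ) : ℂ)) *
        (Complex.I * ((κ * p * Real.sin (q - α + γ) + lam * Real.sin (q - α + ζ) : ℝ) : ℂ))) α := by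
    have := ((hf.ofReal_comp).const_mul Complex.I).cexp
    simpa [mul_comm] using this
  have hη : HasDerivAt (fun x : ℝ => ((η (x - q) : ℝ) : ℂ)) (((deriv η (α - q) : ℝ) : ℂ)) α := by
    have h0 : HasDerivAt η (deriv η (α - q)) (α - q) :=
      (hηC1.differentiable one_ne_zero).differentiableAt.hasDerivAt
    have h1 : HasDerivAt (fun x : ℝ => η (x - q)) (deriv η (α - q)) α := by
      simpa [Function.comp_def] using h0.comp α ((hasDerivAt_id α).sub_const q)
    exact h1.ofReal_comp
  have := hexp.mul hη
  convert this using 1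
  · ext x; simp [CSr]
  · ext x; simp [CSr]
  · push_cast
    ring

lemma key_algebra (r C a f' e d : ℝ) :
    star (Complex.exp (Complex.I * (r:ℝ)) * ((e:ℝ):ℂ)) *
      (-Complex.I * ((C:ℝ):ℂ) * (Complex.exp (Complex.I * (r:ℝ)) *
        (Complex.I * ((f':ℝ):ℂ) * ((e:ℝ):ℂ) + ((d:ℝ):ℂ))) -
        ((a:ℝ):ℂ) * (Complex.exp (Complex.I * (r:ℝ)) * ((e:ℝ):ℂ)))
    = (((C * f' - a) * e ^ 2 : ℝ) : ℂ) - Complex.I * ((C * (e * d) : ℝ) : ℂ) := by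
  have hE : (starRingEnd ℂ) (Complex.exp (Complex.I * (r:ℝ))) * Complex.exp (Complex.I * (r:ℝ)) = 1 := by
    rw [← Complex.exp_conj, ← Complex.exp_add]
    simp
  simp only [star_mul', RCLike.star_def, Complex.conj_ofReal]
  push_cast
  linear_combination (((C * f' - a) * e - Complex.I * C * d) * e) * hE +
    (-(C * f' * e^2) * ((starRingEnd ℂ) (Complex.exp (Complex.I * (r:ℝ))) * Complex.exp (Complex.I * (r:ℝ)))) * Complex.I_sq

theorem lower_symbol_of_momentum
    (κ lam γ ζ : ℝ) (hκ : 0 < κ) (hlam : 0 ≤ lam)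
    (η : ℝ → ℝ) (hηC1 : ContDiff ℝ 1 η) (hηper : Function.Periodic η (2 * π))
    (hsupp : ∀ α ∈ Set.Ioo (γ - π) (γ + π), η α ≠ 0 → α ∈ Set.Ioo (γ - π) γ)
    (hint : IntervalIntegrable (fun q => η q ^ 2 / Real.sin (γ - q)) volume (γ - π) γ)
    (hc1pos : 0 < c1 γ η)
    (hnorm : (∫ α in (0:ℝ)..(2 * π), η α ^ 2) = 1) :
    ∀ p q : ℝ,
      (∫ α in (0:ℝ)..(2 * π), star (CSr κ lam γ ζ η p q α) *
          (-Complex.I * ((c2 γ η / (κ * c1 γ η) : ℝ) : ℂ) * deriv (CSr κ lam γ ζ η p q) α -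
            ((lam * aconst κ γ ζ η : ℝ) : ℂ) * CSr κ lam γ ζ η p q α)) =
        ((c2 γ η / c1 γ η * (∫ α in (0:ℝ)..(2 * π), η α ^ 2 * Real.sin (γ - α)) * p +
            lam * (c2 γ η / (κ * c1 γ η)) *
              (∫ α in (0:ℝ)..(2 * π), η α ^ 2 * Real.sin (ζ - α)) -
            lam * aconst κ γ ζ η : ℝ) : ℂ) := by
  intro p q
  set C : ℝ := c2 γ η / (κ * c1 γ η) with hC
  set A : ℝ := lam * aconst κ γ ζ η with hA
  have hcontη : Continuous η := hηC1.continuous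
  have hcontd : Continuous (deriv η) := hηC1.continuous_deriv le_rfl
  -- the real integrand G (in shifted variable)
  set G : ℝ → ℝ := fun β =>
    (C * (κ * p * Real.sin (γ - β) + lam * Real.sin (ζ - β)) - A) * η β ^ 2 with hG
  have hGcont : Continuous G := by fun_prop
  -- pointwise computation of the integrand
  have hpt : ∀ α : ℝ, star (CSr κ lam γ ζ η p q α) *
      (-Complex.I * ((C : ℝ) : ℂ) * deriv (CSr κ lam γ ζ η p q) α -
        ((A : ℝ) : ℂ) * CSr κ lam γ ζ η p q α) =
      ((G (α - q) : ℝ) : ℂ)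
        - Complex.I * ((C * (η (α - q) * deriv η (α - q)) : ℝ) : ℂ) := by
    intro α
    rw [(csr_hasDerivAt κ lam γ ζ η hηC1 p q α).deriv]
    have hcsr : CSr κ lam γ ζ η p q α = Complex.exp (Complex.I *
        ((κ * p * Real.cos (q - α + γ) + lam * Real.cos (q - α + ζ) : ℝ) : ℂ)) *
        ((η (α - q) : ℝ) : ℂ) := by
      simp [CSr]
    rw [hcsr, key_algebra]
    have h1 : q - α + γ = γ - (α - q) := by ring
    have h2 : q - α + ζ = ζ - (α - q) := by ring
    rw [hG]
    rw [h1, h2]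
  rw [intervalIntegral.integral_congr (fun α _ => hpt α)]
  -- split the integral
  have hint1 : IntervalIntegrable (fun α => ((G (α - q) : ℝ) : ℂ)) volume 0 (2 * π) := by
    apply Continuous.intervalIntegrable; fun_prop
  have hint2 : IntervalIntegrable
      (fun α => Complex.I * ((C * (η (α - q) * deriv η (α - q)) : ℝ) : ℂ)) volume 0 (2 * π) := by
    apply Continuous.intervalIntegrable; fun_prop
  rw [intervalIntegral.integral_sub hint1 hint2]
  -- the second integral vanishes
  have hzero : (∫ α in (0:ℝ)..(2 * π), η (α - q) * deriv η (α - q)) = 0 := by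
    have hd : ∀ x ∈ Set.uIcc (0:ℝ) (2 * π),
        HasDerivAt (fun α => η (α - q) ^ 2 / 2) (η (x - q) * deriv η (x - q)) x := by
      intro x _
      have h0 : HasDerivAt η (deriv η (x - q)) (x - q) :=
        (hηC1.differentiable one_ne_zero).differentiableAt.hasDerivAt
      have h1 : HasDerivAt (fun α => η (α - q)) (deriv η (x - q)) x := by
        simpa [Function.comp_def] using h0.comp x ((hasDerivAt_id x).sub_const q)
      have := (h1.pow 2).div_const 2
      refine this.congr_deriv ?_
      ring
    rw [intervalIntegral.integral_eq_sub_of_hasDerivAt hd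
      (by apply Continuous.intervalIntegrable; fun_prop)]
    have hper' : η (2 * π - q) = η (0 - q) := by
      have := hηper (-q)
      simp only [zero_sub]
      rw [show 2 * π - q = -q + 2 * π by ring, this]
    rw [hper']
    ring
  have hzero2 : (∫ α in (0:ℝ)..(2 * π),
      Complex.I * ((C * (η (α - q) * deriv η (α - q)) : ℝ) : ℂ)) = 0 := by
    rw [intervalIntegral.integral_const_mul]
    have : (fun α => ((C * (η (α - q) * deriv η (α - q)) : ℝ) : ℂ))
        = fun α => ((C : ℝ) : ℂ) * ((η (α - q) * deriv η (α - q) : ℝ) : ℂ) := by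
      ext α; push_cast; ring
    rw [this, intervalIntegral.integral_const_mul, intervalIntegral.integral_ofReal, hzero]
    simp
  rw [hzero2, sub_zero, intervalIntegral.integral_ofReal]
  -- shift the first integral using periodicity
  have hGper : Function.Periodic G (2 * π) := by
    intro x
    simp only [hG]
    rw [show γ - (x + 2 * π) = γ - x - 2 * π by ring,
      show ζ - (x + 2 * π) = ζ - x - 2 * π by ring,
      Real.sin_sub_two_pi, Real.sin_sub_two_pi, hηper x]
  have hshift : (∫ α in (0:ℝ)..(2 * π), G (α - q)) = ∫ β in (0:ℝ)..(2 * π), G β := by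
    rw [intervalIntegral.integral_comp_sub_right G q]
    have := hGper.intervalIntegral_add_eq (-q) 0
    rw [show (0:ℝ) - q = -q by ring, show 2 * π - q = -q + 2 * π by ring]
    simpa using this
  rw [hshift]
  -- compute ∫ G
  have hGval : (∫ β in (0:ℝ)..(2 * π), G β)
      = C * (κ * p) * (∫ α in (0:ℝ)..(2 * π), η α ^ 2 * Real.sin (γ - α))
        + C * lam * (∫ α in (0:ℝ)..(2 * π), η α ^ 2 * Real.sin (ζ - α))
        - A * (∫ α in (0:ℝ)..(2 * π), η α ^ 2) := by
    have hsplit : ∀ β : ℝ, G β = C * (κ * p) * (η β ^ 2 * Real.sin (γ - β))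
        + C * lam * (η β ^ 2 * Real.sin (ζ - β)) - A * (η β ^ 2) := by
      intro β; rw [hG]; ring
    rw [intervalIntegral.integral_congr (fun β _ => hsplit β)]
    rw [intervalIntegral.integral_sub (by apply Continuous.intervalIntegrable; fun_prop)
      (by apply Continuous.intervalIntegrable; fun_prop)]
    rw [intervalIntegral.integral_add (by apply Continuous.intervalIntegrable; fun_prop)
      (by apply Continuous.intervalIntegrable; fun_prop)]
    rw [intervalIntegral.integral_const_mul, intervalIntegral.integral_const_mul,
      intervalIntegral.integral_const_mul]
  rw [hGval, hnorm]
  norm_cast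
  rw [hC, hA]
  field_simp
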